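/- Let L be a random index on ℕ with P(L = ℓ) = ω_ℓ > 0 for all ℓ, and let (Δ_ℓ) be integrable random variables independent of L such that Σ_ℓ E[|Δ_ℓ|] < ∞. Then the estimator Z = Δ_L / ω_L satisfies E[Z] = Σ_{ℓ=0}^∞ E[Δ_ℓ]. -/

import Mathlib

open MeasureTheory ProbabilityTheory

theorem stmt10 {Ω : Type*} [MeasurableSpace Ω] (μ : Measure Ω) [IsProbabilityMeasure μ]
    (L : Ω → ℕ) (hL : Measurable L)
    (ω : ℕ → ℝ) (hω : ∀ ℓ, 0 < ω ℓ)
    (hLdist : ∀ ℓ, μ {x | L x = ℓ} = ENNReal.ofReal (ω ℓ))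
    (Δ : ℕ → Ω → ℝ) (hΔmeas : ∀ ℓ, Measurable (Δ ℓ))
    (hΔint : ∀ ℓ, Integrable (Δ ℓ) μ)
    (hindep : IndepFun L (fun x => fun ℓ => Δ ℓ x) μ)
    (hsum : Summable (fun ℓ => ∫ x, |Δ ℓ x| ∂μ)) :
    Integrable (fun x => Δ (L x) x / ω (L x)) μ ∧
    ∫ x, Δ (L x) x / ω (L x) ∂μ = ∑' ℓ, ∫ x, Δ ℓ x ∂μ := by
  set A : ℕ → Set Ω := fun ℓ => {x | L x = ℓ} with hA
  have hAmeas : ∀ ℓ, MeasurableSet (A ℓ) := fun ℓ => hL (measurableSet_singleton ℓ)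
  -- independence of the indicator of {L = ℓ} and φ ∘ Δ ℓ
  have hind : ∀ (ℓ : ℕ) (φ : ℝ → ℝ), Measurable φ →
      IndepFun ((A ℓ).indicator (fun _ => (1:ℝ))) (fun x => φ (Δ ℓ x)) μ := by
    intro ℓ φ hφ
    have h1 : Measurable (fun n : ℕ => if n = ℓ then (1:ℝ) else 0) :=
      measurable_from_top
    have h2 : Measurable (fun v : ℕ → ℝ => φ (v ℓ)) :=
      hφ.comp (measurable_pi_apply ℓ)
    have := hindep.comp h1 h2
    convert this using 1
    funext x
    by_cases hx : L x = ℓ <;>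
      simp [A, Set.indicator, hx, Function.comp]
    rfl
  -- key computation: integral over {L = ℓ} factorizes
  have key : ∀ (ℓ : ℕ) (φ : ℝ → ℝ), Measurable φ → Integrable (fun x => φ (Δ ℓ x)) μ →
      ∫ x, (A ℓ).indicator (fun x => φ (Δ ℓ x)) x ∂μ = ω ℓ * ∫ x, φ (Δ ℓ x) ∂μ := by
    intro ℓ φ hφ hint
    have hX : Integrable ((A ℓ).indicator (fun _ => (1:ℝ))) μ :=
      (integrable_const (1:ℝ)).indicator (hAmeas ℓ)
    have hmul := (hind ℓ φ hφ).integral_mul_eq_mul_integral hX.aestronglyMeasurable hint.aestronglyMeasurable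
    have heq : ((A ℓ).indicator (fun _ => (1:ℝ))) * (fun x => φ (Δ ℓ x)) =
        (A ℓ).indicator (fun x => φ (Δ ℓ x)) := by
      funext x
      by_cases hx : x ∈ A ℓ <;> simp [Set.indicator, hx]
    rw [heq] at hmul
    rw [hmul, integral_indicator_const _ (hAmeas ℓ)]
    have : μ (A ℓ) = ENNReal.ofReal (ω ℓ) := hLdist ℓ
    rw [measureReal_def, this, ENNReal.toReal_ofReal (hω ℓ).le]
    simp [mul_comm]
  -- the summands
  set g : ℕ → Ω → ℝ := fun ℓ => (A ℓ).indicator (fun x => Δ ℓ x / ω ℓ) with hg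
  have hgmeas : ∀ ℓ, Measurable (g ℓ) := fun ℓ =>
    (((hΔmeas ℓ).div_const _).indicator (hAmeas ℓ))
  have hgint : ∀ ℓ, Integrable (g ℓ) μ := fun ℓ =>
    ((hΔint ℓ).div_const _).indicator (hAmeas ℓ)
  have hωne : ∀ ℓ, ω ℓ ≠ 0 := fun ℓ => (hω ℓ).ne'
  -- ∫ g ℓ = ∫ Δ ℓ
  have hgval : ∀ ℓ, ∫ x, g ℓ x ∂μ = ∫ x, Δ ℓ x ∂μ := by
    intro ℓ
    have := key ℓ (fun t => t / ω ℓ) (measurable_id.div_const _) ((hΔint ℓ).div_const _)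
    rw [hg]
    rw [show (∫ x, (A ℓ).indicator (fun x => Δ ℓ x / ω ℓ) x ∂μ)
        = ω ℓ * ∫ x, Δ ℓ x / ω ℓ ∂μ from this]
    rw [integral_div, mul_comm, div_mul_cancel₀ _ (hωne ℓ)]
  -- ∫ |g ℓ| = ∫ |Δ ℓ|
  have hgabs : ∀ ℓ, ∫ x, |g ℓ x| ∂μ = ∫ x, |Δ ℓ x| ∂μ := by
    intro ℓ
    have habs : (fun x => |g ℓ x|) = (A ℓ).indicator (fun x => |Δ ℓ x| / ω ℓ) := by
      funext x
      by_cases hx : x ∈ A ℓ <;>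
        simp [hg, Set.indicator, hx, abs_div, abs_of_pos (hω ℓ)]
    rw [habs]
    have := key ℓ (fun t => |t| / ω ℓ) (measurable_abs.div_const _)
      (((hΔint ℓ).abs).div_const _)
    rw [this, integral_div, mul_comm, div_mul_cancel₀ _ (hωne ℓ)]
  -- pointwise decomposition
  have hpt : ∀ x, Δ (L x) x / ω (L x) = ∑' ℓ, g ℓ x := by
    intro x
    rw [tsum_eq_single (L x)]
    · simp [hg, Set.indicator, A]
    · intro ℓ hℓ
      have hx : x ∉ A ℓ := fun h => hℓ (Eq.symm h)
      simp [hg, Set.indicator_of_notMem hx]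
  -- measurability of the estimator
  have hfmeas : Measurable (fun x => Δ (L x) x / ω (L x)) := by
    have h1 : Measurable (fun p : Ω × ℕ => Δ p.2 p.1 / ω p.2) :=
      measurable_from_prod_countable_left fun n => (hΔmeas n).div_const (ω n)
    exact h1.comp (measurable_id.prodMk hL)
  -- finiteness of ∑' ∫⁻ ‖g ℓ‖₊
  have hlin : ∀ ℓ, ∫⁻ x, ‖g ℓ x‖₊ ∂μ = ENNReal.ofReal (∫ x, |Δ ℓ x| ∂μ) := by
    intro ℓ
    simp only [← enorm_eq_nnnorm]
    rw [← ofReal_integral_norm_eq_lintegral_enorm (hgint ℓ)]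
    congr 1
    simp only [Real.norm_eq_abs]
    exact hgabs ℓ
  have habsnn : ∀ ℓ, 0 ≤ ∫ x, |Δ ℓ x| ∂μ := fun ℓ =>
    integral_nonneg fun x => abs_nonneg _
  have hsumfin : ∑' ℓ, ∫⁻ x, ‖g ℓ x‖₊ ∂μ ≠ ⊤ := by
    simp_rw [hlin]
    rw [← ENNReal.ofReal_tsum_of_nonneg habsnn hsum]
    exact ENNReal.ofReal_ne_top
  -- integrability
  have hfi : Integrable (fun x => Δ (L x) x / ω (L x)) μ := by
    refine ⟨hfmeas.aestronglyMeasurable, ?_⟩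
    rw [HasFiniteIntegral]
    calc ∫⁻ x, ‖Δ (L x) x / ω (L x)‖₊ ∂μ
        = ∫⁻ x, ∑' ℓ, ‖g ℓ x‖₊ ∂μ := by
          apply lintegral_congr
          intro x
          have : ∀ ℓ, (‖g ℓ x‖₊ : ENNReal) = if ℓ = L x then ‖Δ (L x) x / ω (L x)‖₊ else 0 := by
            intro ℓ
            by_cases hℓ : ℓ = L x
            · subst hℓ; simp [hg, Set.indicator, A]
            · have hx : x ∉ A ℓ := fun h => hℓ (Eq.symm h)
              simp [hg, Set.indicator_of_notMem hx, hℓ]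
          simp_rw [this]
          rw [tsum_eq_single (L x) (fun b hb => by simp [hb])]
          simp
      _ = ∑' ℓ, ∫⁻ x, ‖g ℓ x‖₊ ∂μ :=
          lintegral_tsum fun ℓ => (hgmeas ℓ).nnnorm.coe_nnreal_ennreal.aemeasurable
      _ < ⊤ := hsumfin.lt_top
  refine ⟨hfi, ?_⟩
  calc ∫ x, Δ (L x) x / ω (L x) ∂μ
      = ∫ x, ∑' ℓ, g ℓ x ∂μ := by simp_rw [hpt]
    _ = ∑' ℓ, ∫ x, g ℓ x ∂μ :=
        integral_tsum (fun ℓ => (hgmeas ℓ).aestronglyMeasurable) hsumfin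
    _ = ∑' ℓ, ∫ x, Δ ℓ x ∂μ := tsum_congr hgval
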